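/- arXiv:1110.5692 — 3 statements merged into one kernel-verified Lean document; each statement's English description precedes it below -/
import Mathlib

section
/- Let m ≥ 1 be an integer, ω > 0, and 0 < c₁ ≤ c₂. Then there exists a constant C > 0, depending only on ω, c₁, c₂ and m, such that for every b ∈ ℂ with Re b ≥ c₁ and |b| ≤ c₂, every λ ∈ ℂ with Re λ ≥ ω, and every k ∈ ℤ ∖ {0}, both λ + b·(k+1)^{2m} and λ + b·k^{2m} are nonzero and |k|^{2m+1} · | 1/(λ + b·(k+1)^{2m}) − 1/(λ + b·k^{2m}) | ≤ C. -/
open Finset in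
lemma succ_pow_sub_pow_le (n : ℕ) (a : ℝ) (ha : 0 ≤ a) :
    (a + 1) ^ n - a ^ n ≤ n * (a + 1) ^ (n - 1) := by
  have h := geom_sum₂_mul (a + 1) a n
  have h1 : (a + 1) ^ n - a ^ n = ∑ i ∈ range n, (a + 1) ^ i * a ^ (n - 1 - i) := by
    rw [← h]; ring
  rw [h1]
  calc ∑ i ∈ range n, (a + 1) ^ i * a ^ (n - 1 - i)
      ≤ ∑ _i ∈ range n, (a + 1) ^ (n - 1) := by
        apply Finset.sum_le_sum
        intro i hi
        have hi' : i ≤ n - 1 := by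
          have := Finset.mem_range.mp hi; omega
        calc (a + 1) ^ i * a ^ (n - 1 - i)
            ≤ (a + 1) ^ i * (a + 1) ^ (n - 1 - i) := by
              apply mul_le_mul_of_nonneg_left
              · exact pow_le_pow_left₀ ha (by linarith) _
              · positivity
          _ = (a + 1) ^ (n - 1) := by rw [← pow_add]; congr 1; omega
    _ = n * (a + 1) ^ (n - 1) := by
        rw [Finset.sum_const, Finset.card_range, nsmul_eq_mul]

/-- Uniform bound for the first difference of the resolvent symbol:
there is `C = C(ω, c₁, c₂, m) > 0` such that for all `b` with `Re b ≥ c₁`, `|b| ≤ c₂`,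
all `λ` with `Re λ ≥ ω` and all nonzero `k ∈ ℤ`, the denominators are nonzero and
`|k|^{2m+1} · |1/(λ + b (k+1)^{2m}) − 1/(λ + b k^{2m})| ≤ C`. -/
theorem symbol_first_difference_bound
    (m : ℕ) (hm : 1 ≤ m) (ω c₁ c₂ : ℝ) (hω : 0 < ω) (hc₁ : 0 < c₁) (hc : c₁ ≤ c₂) :
    ∃ C > (0 : ℝ), ∀ b : ℂ, c₁ ≤ b.re → ‖b‖ ≤ c₂ →
      ∀ lam : ℂ, ω ≤ lam.re → ∀ k : ℤ, k ≠ 0 →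
        lam + b * ((k : ℂ) + 1) ^ (2 * m) ≠ 0 ∧
        lam + b * (k : ℂ) ^ (2 * m) ≠ 0 ∧
        |(k : ℝ)| ^ (2 * m + 1) *
          ‖(lam + b * ((k : ℂ) + 1) ^ (2 * m))⁻¹ -
            (lam + b * (k : ℂ) ^ (2 * m))⁻¹‖ ≤ C := by
  have hc₂ : 0 < c₂ := lt_of_lt_of_le hc₁ hc
  refine ⟨c₂ / ω ^ 2 + c₂ * (2 * m) * 16 ^ m / c₁ ^ 2, by positivity, ?_⟩
  intro b hbre hbabs lam hlam k hk
  set n := 2 * m with hn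
  have hn1 : 2 ≤ n := by omega
  have hev : Even n := even_two_mul m
  set x : ℝ := (k : ℝ) ^ n with hxdef
  set y : ℝ := ((k : ℝ) + 1) ^ n with hydef
  have hxnn : 0 ≤ x := hev.pow_nonneg _
  have hynn : 0 ≤ y := hev.pow_nonneg _
  have hcx : (k : ℂ) ^ n = ((x : ℝ) : ℂ) := by push_cast [hxdef]; ring
  have hcy : ((k : ℂ) + 1) ^ n = ((y : ℝ) : ℂ) := by push_cast [hydef]; ring
  set A := lam + b * ((k : ℂ) + 1) ^ n with hA
  set B := lam + b * (k : ℂ) ^ n with hB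
  have hAre : ω + c₁ * y ≤ A.re := by
    rw [hA, hcy]
    simp only [Complex.add_re, Complex.mul_re, Complex.ofReal_re, Complex.ofReal_im,
      mul_zero, sub_zero]
    have : c₁ * y ≤ b.re * y := mul_le_mul_of_nonneg_right hbre hynn
    linarith
  have hBre : ω + c₁ * x ≤ B.re := by
    rw [hB, hcx]
    simp only [Complex.add_re, Complex.mul_re, Complex.ofReal_re, Complex.ofReal_im,
      mul_zero, sub_zero]
    have : c₁ * x ≤ b.re * x := mul_le_mul_of_nonneg_right hbre hxnn
    linarith
  have hA0 : A ≠ 0 := by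
    intro h
    rw [h] at hAre
    simp only [Complex.zero_re] at hAre
    nlinarith
  have hB0 : B ≠ 0 := by
    intro h
    rw [h] at hBre
    simp only [Complex.zero_re] at hBre
    nlinarith
  refine ⟨hA0, hB0, ?_⟩
  have habsA : ω + c₁ * y ≤ ‖A‖ := le_trans hAre (Complex.re_le_norm A)
  have habsB : ω + c₁ * x ≤ ‖B‖ := le_trans hBre (Complex.re_le_norm B)
  have habsApos : 0 < ‖A‖ := norm_pos_iff.mpr hA0
  have habsBpos : 0 < ‖B‖ := norm_pos_iff.mpr hB0
  have hdiff : ‖A⁻¹ - B⁻¹‖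
      = ‖b‖ * |x - y| / (‖A‖ * ‖B‖) := by
    rw [inv_sub_inv hA0 hB0]
    have hBA : B - A = b * ((x : ℂ) - (y : ℂ)) := by rw [hA, hB, hcx, hcy]; ring
    have hxy : (x : ℂ) - (y : ℂ) = ((x - y : ℝ) : ℂ) := by push_cast; ring
    rw [norm_div, norm_mul, hBA, norm_mul, hxy, Complex.norm_real, Real.norm_eq_abs]
  rw [hdiff]
  set r : ℝ := |(k : ℝ)| with hrdef
  have hr1 : (1 : ℝ) ≤ r := by
    have : (1 : ℤ) ≤ |k| := Int.one_le_abs hk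
    calc (1 : ℝ) ≤ ((|k| : ℤ) : ℝ) := by exact_mod_cast this
      _ = r := by rw [hrdef, Int.cast_abs]
  have hrx : r ^ n = x := hev.pow_abs _
  have habs_b : 0 ≤ ‖b‖ := norm_nonneg _
  by_cases hk1 : k = -1
  · -- special case k = -1
    subst hk1
    have hx1 : x = 1 := by rw [hxdef]; push_cast; exact hev.neg_one_pow
    have hy0 : y = 0 := by
      rw [hydef, show ((-1 : ℤ) : ℝ) + 1 = 0 by push_cast; ring, zero_pow (by omega)]
    have hr1' : r = 1 := by rw [hrdef]; norm_num
    rw [hx1, hy0, hr1']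
    have hωA : ω ≤ ‖A‖ := by rw [hy0] at habsA; linarith
    have hωB : ω ≤ ‖B‖ := by rw [hx1] at habsB; nlinarith
    have h1 : ‖b‖ * |(1 : ℝ) - 0| ≤ c₂ := by
      simp only [sub_zero, abs_one, mul_one]; exact hbabs
    calc (1 : ℝ) ^ (n + 1) * (‖b‖ * |(1 : ℝ) - 0| / (‖A‖ * ‖B‖))
        = ‖b‖ * |(1 : ℝ) - 0| / (‖A‖ * ‖B‖) := by rw [one_pow, one_mul]
      _ ≤ c₂ / (ω * ω) := by
          apply div_le_div₀ hc₂.le h1 (by positivity)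
          exact mul_le_mul hωA hωB hω.le habsApos.le
      _ = c₂ / ω ^ 2 := by ring
      _ ≤ c₂ / ω ^ 2 + c₂ * (2 * m) * 16 ^ m / c₁ ^ 2 := by
          have : (0 : ℝ) ≤ c₂ * (2 * m) * 16 ^ m / c₁ ^ 2 := by positivity
          linarith
  · -- generic case k ≠ -1
    -- |k| ≤ 2|k+1|
    have hZ : |k| ≤ 2 * |k + 1| := by
      rw [Int.abs_eq_natAbs, Int.abs_eq_natAbs]; omega
    have h2 : r ≤ 2 * |(k : ℝ) + 1| := by
      rw [hrdef]
      have : (|k| : ℝ) ≤ 2 * (|k + 1| : ℝ) := by exact_mod_cast hZ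
      push_cast at this
      convert this using 2 <;> push_cast <;> ring
    have hry : (r / 2) ^ n ≤ y := by
      have h0 : (0 : ℝ) ≤ r / 2 := by linarith
      calc (r / 2) ^ n ≤ |(k : ℝ) + 1| ^ n := pow_le_pow_left₀ h0 (by linarith) n
        _ = y := hev.pow_abs _
    -- difference bound
    have hdb : |x - y| ≤ (n : ℝ) * (2 * r) ^ (n - 1) := by
      rcases hk.lt_or_gt with hneg | hpos
      · -- k ≤ -2
        have hk2 : k ≤ -2 := by omega
        have hk2' : (k : ℝ) ≤ -2 := by exact_mod_cast hk2
        set a : ℝ := -(k : ℝ) - 1 with hadef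
        have ha : 0 ≤ a := by rw [hadef]; linarith
        have hxa : x = (a + 1) ^ n := by
          rw [hxdef, ← hev.neg_pow (k : ℝ)]; congr 1; rw [hadef]; ring
        have hya : y = a ^ n := by
          rw [hydef, ← hev.neg_pow ((k : ℝ) + 1)]; congr 1; rw [hadef]; ring
        have hle : y ≤ x := by
          rw [hxa, hya]; exact pow_le_pow_left₀ ha (by linarith) n
        have hr_eq : a + 1 = r := by
          rw [hadef, hrdef, abs_of_nonpos (by linarith : (k : ℝ) ≤ 0)]; ring
        rw [abs_of_nonneg (by linarith), hxa, hya]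
        calc (a + 1) ^ n - a ^ n ≤ (n : ℝ) * (a + 1) ^ (n - 1) :=
              succ_pow_sub_pow_le n a ha
          _ ≤ (n : ℝ) * (2 * r) ^ (n - 1) := by
              apply mul_le_mul_of_nonneg_left _ (by positivity)
              apply pow_le_pow_left₀ (by linarith) (by rw [hr_eq]; linarith)
      · -- k ≥ 1
        have hk1' : (1 : ℝ) ≤ (k : ℝ) := by exact_mod_cast hpos
        set a : ℝ := (k : ℝ) with hadef
        have ha : 0 ≤ a := by linarith
        have hle : x ≤ y := by
          rw [hxdef, hydef]; exact pow_le_pow_left₀ ha (by linarith) n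
        have hr_eq : a = r := by
          rw [hadef, hrdef, abs_of_nonneg (by linarith : (0:ℝ) ≤ (k : ℝ))]
        rw [abs_sub_comm, abs_of_nonneg (by linarith)]
        calc y - x ≤ (n : ℝ) * (a + 1) ^ (n - 1) := succ_pow_sub_pow_le n a ha
          _ ≤ (n : ℝ) * (2 * r) ^ (n - 1) := by
              apply mul_le_mul_of_nonneg_left _ (by positivity)
              apply pow_le_pow_left₀ (by linarith) (by rw [← hr_eq]; linarith)
    -- lower bounds on denominators
    have habsA' : c₁ * (r / 2) ^ n ≤ ‖A‖ := by
      have : c₁ * (r / 2) ^ n ≤ c₁ * y := mul_le_mul_of_nonneg_left hry hc₁.le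
      linarith
    have habsB' : c₁ * r ^ n ≤ ‖B‖ := by
      rw [hrx]; linarith [mul_le_mul_of_nonneg_left (le_refl x) hc₁.le]
    -- numerator bound
    have hnum : ‖b‖ * |x - y| ≤ c₂ * ((n : ℝ) * (2 * r) ^ (n - 1)) :=
      mul_le_mul hbabs hdb (abs_nonneg _) hc₂.le
    have hDpos : 0 < ‖A‖ * ‖B‖ := by positivity
    rw [mul_div_assoc']
    rw [div_le_iff₀ hDpos]
    have hrpos : (0 : ℝ) < r := by linarith
    -- key power identities
    have hPQ : r ^ (n + 1) * r ^ (n - 1) = r ^ n * r ^ n := by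
      rw [← pow_add, ← pow_add]; congr 1; omega
    have h2n : (2 : ℝ) ^ (n - 1) * 2 = 2 ^ n := by
      rw [← pow_succ]; congr 1; omega
    have h16 : (16 : ℝ) ^ m = 2 ^ n * 2 ^ n := by
      rw [show (16 : ℝ) = 2 ^ 4 by norm_num, ← pow_mul, ← pow_add]; congr 1; omega
    have key : r ^ (n + 1) * (c₂ * ((n : ℝ) * (2 * r) ^ (n - 1)))
        ≤ (c₂ * (2 * m) * 16 ^ m / c₁ ^ 2) * (c₁ * (r / 2) ^ n * (c₁ * r ^ n)) := by
      have hL : r ^ (n + 1) * (c₂ * ((n : ℝ) * (2 * r) ^ (n - 1)))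
          = c₂ * n * 2 ^ (n - 1) * (r ^ n * r ^ n) := by
        rw [mul_pow, ← hPQ]; ring
      have hR : (c₂ * (2 * m) * 16 ^ m / c₁ ^ 2) * (c₁ * (r / 2) ^ n * (c₁ * r ^ n))
          = c₂ * n * 2 ^ n * (r ^ n * r ^ n) := by
        rw [h16, div_pow]
        have h2npos : (0 : ℝ) < (2 : ℝ) ^ n := by positivity
        field_simp
        push_cast [hn]
        ring
      rw [hL, hR]
      have hp : (0 : ℝ) ≤ (2 : ℝ) ^ (n - 1) := by positivity
      have h1 : (2 : ℝ) ^ (n - 1) ≤ 2 ^ n := by linarith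
      have h2 : c₂ * (n : ℝ) * 2 ^ (n - 1) ≤ c₂ * (n : ℝ) * 2 ^ n :=
        mul_le_mul_of_nonneg_left h1 (by positivity)
      exact mul_le_mul_of_nonneg_right h2 (by positivity)
    calc r ^ (n + 1) * (‖b‖ * |x - y|)
        ≤ r ^ (n + 1) * (c₂ * ((n : ℝ) * (2 * r) ^ (n - 1))) := by
          apply mul_le_mul_of_nonneg_left hnum (by positivity)
      _ ≤ (c₂ * (2 * m) * 16 ^ m / c₁ ^ 2) * (c₁ * (r / 2) ^ n * (c₁ * r ^ n)) := key
      _ ≤ (c₂ * (2 * m) * 16 ^ m / c₁ ^ 2) * (‖A‖ * ‖B‖) := by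
          apply mul_le_mul_of_nonneg_left _ (by positivity)
          apply mul_le_mul habsA' habsB' (by positivity) habsApos.le
      _ ≤ (c₂ / ω ^ 2 + c₂ * (2 * m) * 16 ^ m / c₁ ^ 2) * (‖A‖ * ‖B‖) := by
          apply mul_le_mul_of_nonneg_right _ hDpos.le
          have : (0:ℝ) < c₂ / ω ^ 2 := by positivity
          linarith
end

section
/- Let m ≥ 1 be an integer, ω > 0, and 0 < c₁ ≤ c₂. Then there exists a constant C > 0, depending only on ω, c₁, c₂ and m, such that for every b ∈ ℂ with Re b ≥ c₁ and |b| ≤ c₂, every λ ∈ ℂ with Re λ ≥ ω, and every k ∈ ℤ ∖ {0}: |k| · |λ| · | 1/(λ + b·(k+1)^{2m}) − 1/(λ + b·k^{2m}) | ≤ C. -/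
open Finset

lemma pow_succ_sub_pow_abs_le (n : ℕ) (x : ℝ) (hx : 1 ≤ |x|) :
    |(x + 1) ^ n - x ^ n| ≤ n * (2 * |x|) ^ (n - 1) := by
  have h := geom_sum₂_mul (x + 1) x n
  have hxy : (x + 1) - x = 1 := by ring
  rw [hxy, mul_one] at h
  rw [← h]
  calc |∑ i ∈ range n, (x + 1) ^ i * x ^ (n - 1 - i)|
      ≤ ∑ i ∈ range n, |(x + 1) ^ i * x ^ (n - 1 - i)| := abs_sum_le_sum_abs _ _
    _ ≤ ∑ i ∈ range n, (2 * |x|) ^ (n - 1) := by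
        apply Finset.sum_le_sum
        intro i hi
        rw [abs_mul, abs_pow, abs_pow]
        have h1 : |x + 1| ≤ 2 * |x| := by
          calc |x + 1| ≤ |x| + |1| := abs_add_le _ _
            _ ≤ 2 * |x| := by rw [abs_one]; linarith
        have h2 : |x| ≤ 2 * |x| := by linarith [abs_nonneg x]
        have hmono : |x + 1| ^ i * |x| ^ (n - 1 - i) ≤ (2 * |x|) ^ i * (2 * |x|) ^ (n - 1 - i) :=
          mul_le_mul (pow_le_pow_left₀ (abs_nonneg _) h1 i)
            (pow_le_pow_left₀ (abs_nonneg _) h2 _) (by positivity) (by positivity)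
        refine hmono.trans ?_
        rw [← pow_add]
        have hi' : i < n := mem_range.mp hi
        have he : i + (n - 1 - i) = n - 1 := by omega
        rw [he]
    _ = n * (2 * |x|) ^ (n - 1) := by rw [Finset.sum_const, card_range, nsmul_eq_mul]

/-- Uniform bound for the first difference of the symbol `λ/(λ + b k^{2m})`:
there is `C = C(ω, c₁, c₂, m) > 0` such that for all `b` with `Re b ≥ c₁`, `|b| ≤ c₂`,
all `λ` with `Re λ ≥ ω` and all nonzero `k ∈ ℤ`,
`|k| · |λ| · |1/(λ + b (k+1)^{2m}) − 1/(λ + b k^{2m})| ≤ C`. -/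
theorem weighted_symbol_first_difference_bound
    (m : ℕ) (hm : 1 ≤ m) (ω c₁ c₂ : ℝ) (hω : 0 < ω) (hc₁ : 0 < c₁) (hc : c₁ ≤ c₂) :
    ∃ C > (0 : ℝ), ∀ b : ℂ, c₁ ≤ b.re → ‖b‖ ≤ c₂ →
      ∀ lam : ℂ, ω ≤ lam.re → ∀ k : ℤ, k ≠ 0 →
        |(k : ℝ)| * ‖lam‖ *
          ‖(lam + b * ((k : ℂ) + 1) ^ (2 * m))⁻¹ -
            (lam + b * (k : ℂ) ^ (2 * m))⁻¹‖ ≤ C := by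
  set n := 2 * m with hn
  have hnpos : (0 : ℝ) < (n : ℝ) := by
    have : 0 < n := by omega
    exact_mod_cast this
  refine ⟨(1 + c₂ / c₁) * (c₂ * n * 2 ^ (n - 1) / c₁),
    mul_pos (by have := div_pos (lt_of_lt_of_le hc₁ hc) hc₁; linarith)
      (div_pos (mul_pos (mul_pos (lt_of_lt_of_le hc₁ hc) hnpos) (by positivity)) hc₁), ?_⟩
  intro b hbre hbabs lam hlam k hk
  -- basic positivity facts
  have hc₂ : (0 : ℝ) < c₂ := lt_of_lt_of_le hc₁ hc
  -- lower bound for denominators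
  have key : ∀ x : ℝ, ω + c₁ * x ^ n ≤ ‖lam + b * (x : ℂ) ^ n‖ := by
    intro x
    have hx : (0 : ℝ) ≤ x ^ n := by
      rw [hn, pow_mul']
      positivity
    have hre : (lam + b * (x : ℂ) ^ n).re = lam.re + b.re * x ^ n := by
      have hxx : ((x : ℂ)) ^ n = ((x ^ n : ℝ) : ℂ) := by push_cast; ring
      rw [hxx]
      simp [Complex.add_re, Complex.mul_re, ← Complex.ofReal_pow]
    calc ω + c₁ * x ^ n ≤ lam.re + b.re * x ^ n := by
          have := mul_le_mul_of_nonneg_right hbre hx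
          linarith
      _ = (lam + b * (x : ℂ) ^ n).re := hre.symm
      _ ≤ ‖lam + b * (x : ℂ) ^ n‖ := Complex.re_le_norm _
  have hxk : (1 : ℝ) ≤ |(k : ℝ)| := by
    have : (1 : ℤ) ≤ |k| := Int.one_le_abs hk
    calc (1 : ℝ) ≤ (|k| : ℤ) := by exact_mod_cast this
      _ = |(k : ℝ)| := by push_cast; ring
  have hkpow : ((k : ℝ)) ^ n = |(k : ℝ)| ^ n := by
    rw [hn, pow_mul', pow_mul', ← abs_pow, sq_abs]
  -- abbreviations
  set a : ℂ := lam + b * ((k : ℂ) + 1) ^ n with ha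
  set d : ℂ := lam + b * (k : ℂ) ^ n with hd
  have hka : ((k : ℂ) + 1) = (((k : ℝ) + 1 : ℝ) : ℂ) := by push_cast; ring
  have hkd : ((k : ℂ)) = (((k : ℝ)) : ℂ) := by push_cast; ring
  have habs_a : ω + c₁ * ((k : ℝ) + 1) ^ n ≤ ‖a‖ := by
    rw [ha, hka]; exact key _
  have habs_d : ω + c₁ * ((k : ℝ)) ^ n ≤ ‖d‖ := by
    rw [hd, hkd]; exact key _
  have hpow_a_nonneg : (0 : ℝ) ≤ ((k : ℝ) + 1) ^ n := by rw [hn, pow_mul']; positivity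
  have hpow_d_nonneg : (0 : ℝ) ≤ ((k : ℝ)) ^ n := by rw [hn, pow_mul']; positivity
  have ha_pos : (0 : ℝ) < ‖a‖ :=
    lt_of_lt_of_le (by positivity) habs_a
  have hd_pos : (0 : ℝ) < ‖d‖ :=
    lt_of_lt_of_le (by positivity) habs_d
  have ha0 : a ≠ 0 := by
    intro h; rw [h] at ha_pos; simp at ha_pos
  have hd0 : d ≠ 0 := by
    intro h; rw [h] at hd_pos; simp at hd_pos
  -- rewrite the difference
  have hdiff : a⁻¹ - d⁻¹ = (d - a) / (a * d) := inv_sub_inv ha0 hd0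
  have hda : d - a = b * ((k : ℂ) ^ n - ((k : ℂ) + 1) ^ n) := by
    rw [ha, hd]; ring
  have habs_diff : ‖a⁻¹ - d⁻¹‖ =
      ‖b‖ * |((k : ℝ)) ^ n - ((k : ℝ) + 1) ^ n| / (‖a‖ * ‖d‖) := by
    have hcast : ((k : ℂ)) ^ n - ((k : ℂ) + 1) ^ n =
        (((((k : ℝ)) ^ n - ((k : ℝ) + 1) ^ n : ℝ)) : ℂ) := by push_cast; ring
    rw [hdiff, norm_div, norm_mul, hda, norm_mul, hcast, Complex.norm_real, Real.norm_eq_abs]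
  -- bound |λ| by (1 + c₂/c₁) |a|
  have hlam_bound : ‖lam‖ ≤ (1 + c₂ / c₁) * ‖a‖ := by
    have h1 : ‖lam‖ ≤ ‖a‖ + c₂ * ((k : ℝ) + 1) ^ n := by
      have : lam = a - b * ((k : ℂ) + 1) ^ n := by rw [ha]; ring
      rw [this]
      calc ‖a - b * ((k : ℂ) + 1) ^ n‖
          ≤ ‖a‖ + ‖b * ((k : ℂ) + 1) ^ n‖ := by
            exact (norm_sub_le _ _).trans (by rw [norm_mul])
        _ ≤ ‖a‖ + c₂ * ((k : ℝ) + 1) ^ n := by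
            have : ‖b * ((k : ℂ) + 1) ^ n‖ ≤ c₂ * ((k : ℝ) + 1) ^ n := by
              rw [norm_mul, hka, ← Complex.ofReal_pow, Complex.norm_real, Real.norm_eq_abs,
                abs_of_nonneg hpow_a_nonneg]
              exact mul_le_mul_of_nonneg_right hbabs hpow_a_nonneg
            linarith
    have h2 : c₁ * ((k : ℝ) + 1) ^ n ≤ ‖a‖ := le_trans (by linarith) habs_a
    have h3 : c₂ * ((k : ℝ) + 1) ^ n ≤ (c₂ / c₁) * ‖a‖ := by
      have := mul_le_mul_of_nonneg_left h2 (le_of_lt (div_pos hc₂ hc₁))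
      calc c₂ * ((k : ℝ) + 1) ^ n = (c₂ / c₁) * (c₁ * ((k : ℝ) + 1) ^ n) := by
            field_simp
        _ ≤ (c₂ / c₁) * ‖a‖ := this
    calc ‖lam‖ ≤ ‖a‖ + c₂ * ((k : ℝ) + 1) ^ n := h1
      _ ≤ ‖a‖ + (c₂ / c₁) * ‖a‖ := by linarith
      _ = (1 + c₂ / c₁) * ‖a‖ := by ring
  -- bound |k| |b| |Δ| by K2 |d|
  have hΔ : |((k : ℝ)) ^ n - ((k : ℝ) + 1) ^ n| ≤ n * (2 * |(k : ℝ)|) ^ (n - 1) := by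
    rw [abs_sub_comm]
    exact pow_succ_sub_pow_abs_le n (k : ℝ) hxk
  have hnum : |(k : ℝ)| * (‖b‖ * |((k : ℝ)) ^ n - ((k : ℝ) + 1) ^ n|) ≤
      (c₂ * n * 2 ^ (n - 1) / c₁) * ‖d‖ := by
    have hb0 : (0 : ℝ) ≤ ‖b‖ := norm_nonneg b
    have step1 : |(k : ℝ)| * (‖b‖ * |((k : ℝ)) ^ n - ((k : ℝ) + 1) ^ n|) ≤
        |(k : ℝ)| * (c₂ * (n * (2 * |(k : ℝ)|) ^ (n - 1))) := by
      apply mul_le_mul_of_nonneg_left _ (abs_nonneg _)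
      exact mul_le_mul hbabs hΔ (abs_nonneg _) (le_of_lt hc₂)
    have hkabs : (0 : ℝ) < |(k : ℝ)| := lt_of_lt_of_le one_pos hxk
    have step2 : |(k : ℝ)| * (c₂ * (n * (2 * |(k : ℝ)|) ^ (n - 1))) =
        c₂ * n * 2 ^ (n - 1) * |(k : ℝ)| ^ n := by
      have hkn : |(k : ℝ)| * |(k : ℝ)| ^ (n - 1) = |(k : ℝ)| ^ n := by
        rw [← pow_succ']
        congr 1
        omega
      rw [mul_pow, ← hkn]
      ring
    have step3 : c₂ * n * 2 ^ (n - 1) * |(k : ℝ)| ^ n ≤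
        (c₂ * n * 2 ^ (n - 1) / c₁) * ‖d‖ := by
      have hKpos : (0 : ℝ) ≤ c₂ * n * 2 ^ (n - 1) / c₁ := by positivity
      have hdk : c₁ * |(k : ℝ)| ^ n ≤ ‖d‖ := by
        rw [← hkpow]; exact le_trans (by linarith) habs_d
      calc c₂ * n * 2 ^ (n - 1) * |(k : ℝ)| ^ n
          = (c₂ * n * 2 ^ (n - 1) / c₁) * (c₁ * |(k : ℝ)| ^ n) := by field_simp
        _ ≤ (c₂ * n * 2 ^ (n - 1) / c₁) * ‖d‖ :=
            mul_le_mul_of_nonneg_left hdk hKpos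
    calc |(k : ℝ)| * (‖b‖ * |((k : ℝ)) ^ n - ((k : ℝ) + 1) ^ n|)
        ≤ |(k : ℝ)| * (c₂ * (n * (2 * |(k : ℝ)|) ^ (n - 1))) := step1
      _ = c₂ * n * 2 ^ (n - 1) * |(k : ℝ)| ^ n := step2
      _ ≤ (c₂ * n * 2 ^ (n - 1) / c₁) * ‖d‖ := step3
  -- put things together
  rw [habs_diff]
  have hrw : |(k : ℝ)| * ‖lam‖ *
      (‖b‖ * |((k : ℝ)) ^ n - ((k : ℝ) + 1) ^ n| /
        (‖a‖ * ‖d‖)) =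
      ‖lam‖ * (|(k : ℝ)| * (‖b‖ * |((k : ℝ)) ^ n - ((k : ℝ) + 1) ^ n|)) /
        (‖a‖ * ‖d‖) := by ring
  rw [hrw, div_le_iff₀ (by positivity : (0:ℝ) < ‖a‖ * ‖d‖)]
  calc ‖lam‖ * (|(k : ℝ)| * (‖b‖ * |((k : ℝ)) ^ n - ((k : ℝ) + 1) ^ n|))
      ≤ ((1 + c₂ / c₁) * ‖a‖) * ((c₂ * n * 2 ^ (n - 1) / c₁) * ‖d‖) := by
        apply mul_le_mul hlam_bound hnum (by positivity) (by positivity)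
    _ = (1 + c₂ / c₁) * (c₂ * ↑n * 2 ^ (n - 1) / c₁) * (‖a‖ * ‖d‖) := by
        ring
end

section
/- Let α ∈ (0,1), ε ∈ (0,1/2), z ∈ ℝ. Let X : ℝ → ℝ be continuously differentiable with X(x) = 0 for |x| ≥ 1. Let b : ℝ → ℂ be 2π-periodic with [b]_{α,per} < ∞, and define the 2π-periodic function b_{z,ε}(x) := Σ_{k∈ℤ} X(x − z − 2πk)·( b(z + r_ε(x − z − 2πk)) − b(z) ) (for each x at most one summand is nonzero). Set [b]_{α,z,ε} := sup{ |b(x) − b(y)|/d_per(x,y)^α : d_per(x,z) ≤ ε, d_per(y,z) ≤ ε, d_per(x,y) > 0 }. Then: sup_ℝ |b_{z,ε}| ≤ ε^α · (sup|X|) · [b]_{α,z,ε}, and [b_{z,ε}]_{α,per} ≤ ( sup|X| + ε^α · π^{1−α} · sup|X′| ) · [b]_{α,z,ε}; consequently sup|b_{z,ε}| + [b_{z,ε}]_{α,per} ≤ ( (1 + ε^α)·sup|X| + ε^α · π^{1−α} · sup|X′| ) · [b]_{α,z,ε}. -/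
open Real

/-- The canonical distance on `ℝ / 2πℤ`: `d_per(x,y) = inf_{k ∈ ℤ} |x - y + 2πk|`. -/
noncomputable def dper (x y : ℝ) : ℝ := ⨅ k : ℤ, |x - y + 2 * π * k|

/-- A function `f : ℝ → ℂ` is `2π`-periodic. -/
def Per (f : ℝ → ℂ) : Prop := ∀ x, f (x + 2 * π) = f x

/-- The truncation `r_ε`: `r_ε(x) = x` if `|x| ≤ ε`, `ε` if `x > ε`, `−ε` if `x < −ε`. -/
noncomputable def rtr (ε x : ℝ) : ℝ := if |x| ≤ ε then x else if ε < x then ε else -ε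

/-- The localized coefficient
`b_{z,ε}(x) = Σ_{k ∈ ℤ} X(x − z − 2πk) · (b(z + r_ε(x − z − 2πk)) − b(z))`. -/
noncomputable def bze (X : ℝ → ℝ) (b : ℝ → ℂ) (z ε x : ℝ) : ℂ :=
  ∑' k : ℤ, (X (x - z - 2 * π * k) : ℂ) * (b (z + rtr ε (x - z - 2 * π * k)) - b z)

/-- Set of periodic Hölder quotients of `g` with exponent `α`. -/
def perHolderSet (α : ℝ) (g : ℝ → ℂ) : Set ℝ :=
  {r | ∃ x y : ℝ, 0 < dper x y ∧ r = ‖g x - g y‖ / dper x y ^ α}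

/-- The periodic Hölder seminorm `[g]_{α,per}`. -/
noncomputable def perSemi (α : ℝ) (g : ℝ → ℂ) : ℝ := sSup (perHolderSet α g)

/-- The localized Hölder seminorm `[b]_{α,z,ε}` over the ball of radius `ε` around `z`. -/
noncomputable def locSemi (α : ℝ) (b : ℝ → ℂ) (z ε : ℝ) : ℝ :=
  sSup {r | ∃ x y : ℝ, dper x z ≤ ε ∧ dper y z ≤ ε ∧ 0 < dper x y ∧
      r = ‖b x - b y‖ / dper x y ^ α}


/-! ### Auxiliary material -/

noncomputable def red (u : ℝ) : ℝ := u - 2 * π * round (u / (2 * π))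

lemma red_rep (u : ℝ) : ∃ k : ℤ, red u = u + 2 * π * k :=
  ⟨-round (u / (2 * π)), by simp only [red]; push_cast; ring⟩

lemma abs_red_le (u : ℝ) : |red u| ≤ π := by
  have h := abs_sub_round (u / (2 * π))
  have h2 : red u = 2 * π * (u / (2 * π) - round (u / (2 * π))) := by
    simp only [red]; field_simp
  rw [h2, abs_mul, abs_of_pos (by positivity : (0:ℝ) < 2 * π)]
  nlinarith [pi_pos]

lemma bddBelow_dper (x y : ℝ) : BddBelow (Set.range fun k : ℤ => |x - y + 2 * π * k|) := by
  refine ⟨0, ?_⟩; rintro r ⟨k, rfl⟩; exact abs_nonneg _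

lemma dper_le_rep (x y w : ℝ) (m : ℤ) (h : x - y = w + 2 * π * m) : dper x y ≤ |w| := by
  have h1 := ciInf_le (bddBelow_dper x y) (-m)
  have h2 : x - y + 2 * π * ((-m : ℤ) : ℝ) = w := by push_cast; rw [h]; ring
  rw [h2] at h1; exact h1

lemma dper_le_abs (x y : ℝ) : dper x y ≤ |x - y| :=
  dper_le_rep x y (x - y) 0 (by push_cast; ring)

lemma dper_nonneg (x y : ℝ) : 0 ≤ dper x y :=
  le_ciInf fun _ => abs_nonneg _

lemma dper_eq_abs_red (x y : ℝ) : dper x y = |red (x - y)| := by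
  obtain ⟨k₀, hk₀⟩ := red_rep (x - y)
  apply le_antisymm
  · exact dper_le_rep x y (red (x - y)) (-k₀) (by push_cast; rw [hk₀]; ring)
  · apply le_ciInf; intro k
    by_cases hk : k = k₀
    · subst hk; rw [← hk₀]
    · have h1 : (1:ℝ) ≤ |((k : ℝ) - (k₀ : ℝ))| := by
        have := Int.one_le_abs (sub_ne_zero.mpr hk)
        calc (1:ℝ) = ((1 : ℤ) : ℝ) := by norm_num
          _ ≤ ((|k - k₀| : ℤ) : ℝ) := by exact_mod_cast this
          _ = |((k : ℝ) - (k₀ : ℝ))| := by push_cast; ring_nf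
      have h2 : x - y + 2 * π * k = red (x - y) + 2 * π * ((k : ℝ) - (k₀ : ℝ)) := by
        rw [hk₀]; ring
      have h3 := abs_red_le (x - y)
      rw [h2]
      have h4 : |red (x - y) + 2 * π * ((k:ℝ) - (k₀:ℝ))| ≥
          |2 * π * ((k:ℝ) - (k₀:ℝ))| - |red (x - y)| := by
        have := abs_add_le (red (x - y) + 2 * π * ((k:ℝ) - (k₀:ℝ))) (-(red (x - y)))
        simp only [add_neg_cancel_comm, abs_neg] at this
        linarith
      rw [abs_mul, abs_of_pos (by positivity : (0:ℝ) < 2 * π)] at h4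
      nlinarith [pi_pos]

lemma rep_abs_eq {u v : ℝ} (m : ℤ) (h : v = u + 2 * π * m) (hu : |u| ≤ π) (hv : |v| ≤ π) :
    |v| = |u| := by
  rcases eq_or_ne m 0 with rfl | hm
  · simp only [Int.cast_zero, mul_zero, add_zero] at h; rw [h]
  · have h1 : (1:ℝ) ≤ |(m : ℝ)| := by
      have := Int.one_le_abs hm
      calc (1:ℝ) = ((1 : ℤ) : ℝ) := by norm_num
        _ ≤ ((|m| : ℤ) : ℝ) := by exact_mod_cast this
        _ = |(m : ℝ)| := by rw [Int.cast_abs]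
    have h2 : |v - u| = 2 * π * |(m:ℝ)| := by
      rw [h, show u + 2 * π * (m:ℝ) - u = 2 * π * (m:ℝ) from by ring, abs_mul,
        abs_of_pos (by positivity : (0:ℝ) < 2 * π)]
    have h3 : |v - u| ≤ |v| + |u| := abs_sub v u
    have hπ := pi_pos
    have hvp : |v| = π := by nlinarith
    have hup : |u| = π := by nlinarith
    rw [hvp, hup]

lemma dper_eq_of_rep (x y w : ℝ) (m : ℤ) (h : x - y = w + 2 * π * m) (hw : |w| ≤ π) :
    dper x y = |w| := by
  rw [dper_eq_abs_red]
  obtain ⟨k, hk⟩ := red_rep (x - y)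
  exact rep_abs_eq (m + k) (by rw [hk, h]; push_cast; ring) hw (abs_red_le _)

lemma red_def (u : ℝ) : red u = u - 2 * π * round (u / (2 * π)) := rfl

lemma one_le_pi : (1:ℝ) ≤ π := by linarith [pi_gt_three]

lemma rtr_eq (ε : ℝ) (hε : 0 ≤ ε) (x : ℝ) : rtr ε x = max (-ε) (min ε x) := by
  unfold rtr
  split_ifs with h1 h2
  · obtain ⟨ha, hb⟩ := abs_le.mp h1
    rw [min_eq_right hb, max_eq_right ha]
  · rw [min_eq_left h2.le, max_eq_right (by linarith)]
  · push_neg at h1 h2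
    have hx : x < -ε := by
      rcases abs_cases x with ⟨h, _⟩ | ⟨h, _⟩ <;> [linarith; linarith]
    rw [min_eq_right (by linarith), max_eq_left (by linarith)]

lemma rtr_abs_le (ε : ℝ) (hε : 0 ≤ ε) (x : ℝ) : |rtr ε x| ≤ ε := by
  rw [rtr_eq ε hε, abs_le]
  constructor
  · exact le_max_left _ _
  · exact max_le (by linarith) (min_le_left _ _)

lemma rtr_lip (ε : ℝ) (hε : 0 ≤ ε) (u v : ℝ) : |rtr ε u - rtr ε v| ≤ |u - v| := by
  rw [rtr_eq ε hε, rtr_eq ε hε]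
  have h1 : |max (-ε) (min ε u) - max (-ε) (min ε v)| ≤ max |(-ε) - (-ε)| |min ε u - min ε v| :=
    abs_max_sub_max_le_max _ _ _ _
  have h2 : |min ε u - min ε v| ≤ max |ε - ε| |u - v| := abs_min_sub_min_le_max _ _ _ _
  simp only [sub_self, abs_zero] at h1 h2
  calc |max (-ε) (min ε u) - max (-ε) (min ε v)| ≤ max 0 |min ε u - min ε v| := h1
    _ = |min ε u - min ε v| := max_eq_right (abs_nonneg _)
    _ ≤ max 0 |u - v| := h2
    _ = |u - v| := max_eq_right (abs_nonneg _)

noncomputable def fzd (X : ℝ → ℝ) (b : ℝ → ℂ) (z ε t : ℝ) : ℂ :=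
  (X t : ℂ) * (b (z + rtr ε t) - b z)

lemma fzd_vanish (X : ℝ → ℝ) (b : ℝ → ℂ) (z ε : ℝ)
    (hXsupp : ∀ x : ℝ, 1 ≤ |x| → X x = 0) (t : ℝ) (ht : 1 ≤ |t|) :
    fzd X b z ε t = 0 := by
  unfold fzd; rw [hXsupp t ht]; simp

lemma bze_eq (X : ℝ → ℝ) (b : ℝ → ℂ) (z ε : ℝ)
    (hXsupp : ∀ x : ℝ, 1 ≤ |x| → X x = 0) (x : ℝ) :
    bze X b z ε x = fzd X b z ε (red (x - z)) := by
  unfold bze fzd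
  rw [tsum_eq_single (round ((x - z) / (2 * π)))]
  · rw [show x - z - 2 * π * (round ((x - z) / (2 * π)) : ℝ) = red (x - z) from
      (red_def (x - z)).symm]
  · intro k hk
    set k₀ := round ((x - z) / (2 * π)) with hk₀def
    have hrep : x - z - 2 * π * k = red (x - z) + 2 * π * ((k₀ : ℝ) - (k : ℝ)) := by
      rw [red_def]; ring
    have h1 : (1:ℝ) ≤ |(k₀ : ℝ) - (k : ℝ)| := by
      have h0 : k₀ - k ≠ 0 := sub_ne_zero.mpr (Ne.symm hk)
      have := Int.one_le_abs h0
      calc (1:ℝ) = ((1:ℤ):ℝ) := by norm_num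
        _ ≤ ((|k₀ - k| : ℤ) : ℝ) := by exact_mod_cast this
        _ = |(k₀:ℝ) - (k:ℝ)| := by push_cast; ring_nf
    have h2 : (1:ℝ) ≤ |x - z - 2 * π * k| := by
      have h3 := abs_red_le (x - z)
      have h4 : |red (x - z) + 2 * π * ((k₀:ℝ) - (k:ℝ))| ≥
          |2 * π * ((k₀:ℝ) - (k:ℝ))| - |red (x - z)| := by
        have := abs_add_le (red (x - z) + 2 * π * ((k₀:ℝ) - (k:ℝ))) (-(red (x - z)))
        simp only [add_neg_cancel_comm, abs_neg] at this
        linarith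
      rw [abs_mul, abs_of_pos (by positivity : (0:ℝ) < 2 * π)] at h4
      rw [hrep]
      nlinarith [pi_gt_three]
    rw [hXsupp _ h2]; simp

lemma loc_bound (α ε z : ℝ) (hα0 : 0 < α) (b : ℝ → ℂ) (hb : Per b)
    (hbdd : BddAbove {r | ∃ x y : ℝ, dper x z ≤ ε ∧ dper y z ≤ ε ∧ 0 < dper x y ∧
      r = ‖b x - b y‖ / dper x y ^ α}) :
    ∀ u v : ℝ, dper u z ≤ ε → dper v z ≤ ε →
      ‖b u - b v‖ ≤ locSemi α b z ε * dper u v ^ α := by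
  intro u v hu hv
  rcases (dper_nonneg u v).lt_or_eq with h | h
  · have hmem : ‖b u - b v‖ / dper u v ^ α ∈
        {r | ∃ x y : ℝ, dper x z ≤ ε ∧ dper y z ≤ ε ∧ 0 < dper x y ∧
          r = ‖b x - b y‖ / dper x y ^ α} := ⟨u, v, hu, hv, h, rfl⟩
    have hle := le_csSup hbdd hmem
    rw [div_le_iff₀ (rpow_pos_of_pos h α)] at hle
    unfold locSemi
    exact hle
  · -- dper u v = 0, so b u = b v
    have hred : red (u - v) = 0 := by
      have := dper_eq_abs_red u v
      rw [← h] at this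
      exact abs_eq_zero.mp this.symm
    have hper : Function.Periodic b (2 * π) := hb
    obtain ⟨k, hk⟩ := red_rep (u - v)
    rw [hred] at hk
    have huv : u = v + (-k : ℤ) * (2 * π) := by push_cast; linarith
    have hbuv : b u = b v := by rw [huv, (hper.int_mul (-k)) v]
    rw [hbuv, ← h, sub_self]
    simp [Real.zero_rpow (ne_of_gt hα0)]

section Key

variable (α ε z : ℝ) (X : ℝ → ℝ) (b : ℝ → ℂ) (MX MX' L : ℝ)

lemma key_lemma (hα0 : 0 < α) (hα1 : α < 1) (hε0 : 0 < ε)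
    (hMX : ∀ t, |X t| ≤ MX) (hMX0 : 0 ≤ MX) (hMX'0 : 0 ≤ MX')
    (hXlip : ∀ t s : ℝ, |X t - X s| ≤ MX' * |t - s|)
    (hL0 : 0 ≤ L)
    (hbL : ∀ u v : ℝ, dper u z ≤ ε → dper v z ≤ ε →
      ‖b u - b v‖ ≤ L * dper u v ^ α)
    (t s : ℝ) (hts : |t - s| ≤ π) :
    ‖fzd X b z ε t - fzd X b z ε s‖ ≤
      (MX + ε ^ α * π ^ (1 - α) * MX') * L * |t - s| ^ α := by
  have hεα : (0:ℝ) ≤ ε ^ α := rpow_nonneg hε0.le α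
  have hπα : (0:ℝ) ≤ π ^ (1 - α) := rpow_nonneg pi_pos.le _
  have hdu : dper (z + rtr ε t) z ≤ ε :=
    le_trans (le_trans (dper_le_abs _ _) (le_of_eq (by ring_nf))) (rtr_abs_le ε hε0.le t)
  have hdv : dper (z + rtr ε s) z ≤ ε :=
    le_trans (le_trans (dper_le_abs _ _) (le_of_eq (by ring_nf))) (rtr_abs_le ε hε0.le s)
  have hdz : dper z z ≤ ε := le_trans (dper_le_abs z z) (by simp [hε0.le])
  -- A1
  have hA1 : ‖b (z + rtr ε t) - b (z + rtr ε s)‖ ≤ L * |t - s| ^ α := by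
    refine le_trans (hbL _ _ hdu hdv) ?_
    have h1 : dper (z + rtr ε t) (z + rtr ε s) ≤ |t - s| := by
      refine le_trans (le_trans (dper_le_abs _ _) (le_of_eq ?_)) (rtr_lip ε hε0.le t s)
      ring_nf
    gcongr
    exact dper_nonneg _ _
  -- A2
  have hA2 : ‖b (z + rtr ε s) - b z‖ ≤ L * ε ^ α := by
    refine le_trans (hbL _ _ hdv hdz) ?_
    have h1 : dper (z + rtr ε s) z ≤ ε := hdv
    gcongr
    exact dper_nonneg _ _
  -- A3
  have hA3 : |X t - X s| ≤ MX' * (π ^ (1 - α) * |t - s| ^ α) := by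
    rcases eq_or_ne t s with rfl | hne
    · simp [Real.zero_rpow (ne_of_gt hα0)]
      try positivity
    · have hpos : 0 < |t - s| := abs_pos.mpr (sub_ne_zero.mpr hne)
      have h1 : |t - s| = |t - s| ^ α * |t - s| ^ (1 - α) := by
        rw [← Real.rpow_add hpos, add_sub_cancel, Real.rpow_one]
      have h2 : |t - s| ^ (1 - α) ≤ π ^ (1 - α) :=
        Real.rpow_le_rpow (abs_nonneg _) hts (by linarith)
      calc |X t - X s| ≤ MX' * |t - s| := hXlip t s
        _ = MX' * (|t - s| ^ α * |t - s| ^ (1 - α)) := by rw [← h1]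
        _ ≤ MX' * (|t - s| ^ α * π ^ (1 - α)) := by
            gcongr
            try exact rpow_nonneg (abs_nonneg _) _
        _ = MX' * (π ^ (1 - α) * |t - s| ^ α) := by ring
  -- decomposition
  have hdecomp : fzd X b z ε t - fzd X b z ε s =
      (X t : ℂ) * (b (z + rtr ε t) - b (z + rtr ε s)) +
        ((X t - X s : ℝ) : ℂ) * (b (z + rtr ε s) - b z) := by
    unfold fzd; push_cast; ring
  calc ‖fzd X b z ε t - fzd X b z ε s‖
      ≤ |X t| * ‖b (z + rtr ε t) - b (z + rtr ε s)‖ +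
        |X t - X s| * ‖b (z + rtr ε s) - b z‖ := by
        rw [hdecomp]
        refine le_trans (norm_add_le _ _) ?_
        rw [norm_mul, norm_mul, Complex.norm_real, Complex.norm_real, Real.norm_eq_abs,
          Real.norm_eq_abs]
    _ ≤ MX * (L * |t - s| ^ α) +
        (MX' * (π ^ (1 - α) * |t - s| ^ α)) * (L * ε ^ α) := by
        refine add_le_add (mul_le_mul (hMX t) hA1 (norm_nonneg _) hMX0)
          (mul_le_mul hA3 hA2 (norm_nonneg _) (by positivity))
    _ = (MX + ε ^ α * π ^ (1 - α) * MX') * L * |t - s| ^ α := by ring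

lemma keyB_lemma (hα0 : 0 < α) (hα1 : α < 1) (hε0 : 0 < ε)
    (hXsupp : ∀ x : ℝ, 1 ≤ |x| → X x = 0)
    (hMX : ∀ t, |X t| ≤ MX) (hMX0 : 0 ≤ MX) (hMX'0 : 0 ≤ MX')
    (hXlip : ∀ t s : ℝ, |X t - X s| ≤ MX' * |t - s|)
    (hL0 : 0 ≤ L)
    (hbL : ∀ u v : ℝ, dper u z ≤ ε → dper v z ≤ ε →
      ‖b u - b v‖ ≤ L * dper u v ^ α)
    (t s w : ℝ) (ht : |t| ≤ π) (hs : |s| ≤ π) (hw : |w| ≤ π)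
    (hrep : t - s = w + 2 * π) :
    ‖fzd X b z ε t - fzd X b z ε s‖ ≤
      (MX + ε ^ α * π ^ (1 - α) * MX') * L * |w| ^ α := by
  have hπ3 := pi_gt_three
  have hwt : |t| ≤ π := ht
  by_cases hft : fzd X b z ε t = 0
  · have h1 : fzd X b z ε (t - 2 * π) = 0 := by
      apply fzd_vanish _ _ _ _ hXsupp
      rcases abs_le.mp ht with ⟨_, h⟩
      rw [le_abs]; right; nlinarith
    have h2 : (t - 2 * π) - s = w := by linarith
    calc ‖fzd X b z ε t - fzd X b z ε s‖
        = ‖fzd X b z ε (t - 2 * π) - fzd X b z ε s‖ := by rw [hft, h1]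
      _ ≤ (MX + ε ^ α * π ^ (1 - α) * MX') * L * |(t - 2 * π) - s| ^ α :=
          key_lemma α ε z X b MX MX' L hα0 hα1 hε0 hMX hMX0 hMX'0 hXlip hL0 hbL _ _
            (by rw [h2]; exact hw)
      _ = (MX + ε ^ α * π ^ (1 - α) * MX') * L * |w| ^ α := by rw [h2]
  · have htlt : |t| < 1 := by
      by_contra hc
      exact hft (fzd_vanish _ _ _ _ hXsupp t (not_lt.mp hc))
    have hfs : fzd X b z ε s = 0 := by
      apply fzd_vanish _ _ _ _ hXsupp
      -- s = t - w - 2π ≤ 1 + π - 2π = 1 - π < -1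
      rcases abs_le.mp hw with ⟨hw1, hw2⟩
      have hs1 : s ≤ t - 2 * π + π := by linarith
      have : s ≤ -1 := by nlinarith [abs_lt.mp htlt]
      rw [le_abs]; right; linarith
    have h1 : fzd X b z ε (s + 2 * π) = 0 := by
      apply fzd_vanish _ _ _ _ hXsupp
      rcases abs_le.mp hs with ⟨h, _⟩
      rw [le_abs]; left; nlinarith
    have h2 : t - (s + 2 * π) = w := by linarith
    calc ‖fzd X b z ε t - fzd X b z ε s‖
        = ‖fzd X b z ε t - fzd X b z ε (s + 2 * π)‖ := by rw [hfs, h1]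
      _ ≤ (MX + ε ^ α * π ^ (1 - α) * MX') * L * |t - (s + 2 * π)| ^ α :=
          key_lemma α ε z X b MX MX' L hα0 hα1 hε0 hMX hMX0 hMX'0 hXlip hL0 hbL _ _
            (by rw [h2]; exact hw)
      _ = (MX + ε ^ α * π ^ (1 - α) * MX') * L * |w| ^ α := by rw [h2]

lemma main_lemma (hα0 : 0 < α) (hα1 : α < 1) (hε0 : 0 < ε)
    (hXsupp : ∀ x : ℝ, 1 ≤ |x| → X x = 0)
    (hMX : ∀ t, |X t| ≤ MX) (hMX0 : 0 ≤ MX) (hMX'0 : 0 ≤ MX')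
    (hXlip : ∀ t s : ℝ, |X t - X s| ≤ MX' * |t - s|)
    (hL0 : 0 ≤ L)
    (hbL : ∀ u v : ℝ, dper u z ≤ ε → dper v z ≤ ε →
      ‖b u - b v‖ ≤ L * dper u v ^ α)
    (x y : ℝ) :
    ‖bze X b z ε x - bze X b z ε y‖ ≤
      (MX + ε ^ α * π ^ (1 - α) * MX') * L * dper x y ^ α := by
  have hπ3 := pi_gt_three
  set t := red (x - z) with htdef
  set s := red (y - z) with hsdef
  have ht : |t| ≤ π := abs_red_le _
  have hs : |s| ≤ π := abs_red_le _
  rw [bze_eq X b z ε hXsupp x, bze_eq X b z ε hXsupp y]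
  -- w := red (t - s) represents both t - s and x - y
  set w := red (t - s) with hwdef
  have hw : |w| ≤ π := abs_red_le _
  obtain ⟨m, hm⟩ := red_rep (t - s)
  -- t - s = w + 2π(-m)
  have hrep_ts : t - s = w + 2 * π * (-m : ℤ) := by
    rw [hwdef, hm]; push_cast; ring
  -- dper x y = |w|
  have hdxy : dper x y = |w| := by
    obtain ⟨a, ha⟩ := red_rep (x - z)
    obtain ⟨c, hc⟩ := red_rep (y - z)
    refine dper_eq_of_rep x y w (-m - a + c) ?_ hw
    have h1 : t - s = (x - z + 2 * π * a) - (y - z + 2 * π * c) := by rw [← ha, ← hc]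
    push_cast
    push_cast at hrep_ts
    linarith
  rw [hdxy]
  -- bound |m| ≤ 1
  have hm1 : m = 0 ∨ m = 1 ∨ m = -1 := by
    have h2 : |t - s| ≤ 2 * π := by
      rcases abs_le.mp ht with ⟨h1, h2⟩
      rcases abs_le.mp hs with ⟨h3, h4⟩
      rw [abs_le]; constructor <;> linarith
    have h3 : |2 * π * ((-m : ℤ) : ℝ)| ≤ 3 * π := by
      have : 2 * π * ((-m:ℤ):ℝ) = (t - s) - w := by rw [hrep_ts]; ring
      rw [this]
      calc |t - s - w| ≤ |t - s| + |w| := abs_sub _ _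
        _ ≤ 3 * π := by linarith
    rw [abs_mul, abs_of_pos (by positivity : (0:ℝ) < 2 * π)] at h3
    have h4 : |((-m:ℤ):ℝ)| ≤ 3 / 2 := by nlinarith [pi_pos]
    have h5 : |(-m : ℤ)| ≤ 1 := by
      by_contra hc
      push_neg at hc
      have : (2:ℤ) ≤ |(-m)| := hc
      have : (2:ℝ) ≤ |((-m:ℤ):ℝ)| := by
        rw [← Int.cast_abs]; exact_mod_cast this
      linarith
    have := Int.abs_le_one_iff.mp h5
    rcases this with h | h | h
    · left; omega
    · right; right; omega
    · right; left; omega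
  rcases hm1 with rfl | rfl | rfl
  · -- m = 0 : t - s = w
    have : t - s = w := by push_cast at hrep_ts; linarith
    rw [← this]
    exact key_lemma α ε z X b MX MX' L hα0 hα1 hε0 hMX hMX0 hMX'0 hXlip hL0 hbL t s
      (this ▸ hw)
  · -- m = 1 : t - s = w - 2π, i.e. s - t = -w + 2π
    have hrep' : s - t = -w + 2 * π := by push_cast at hrep_ts; linarith
    have := keyB_lemma α ε z X b MX MX' L hα0 hα1 hε0 hXsupp hMX hMX0 hMX'0 hXlip hL0 hbL
      s t (-w) hs ht (by rwa [abs_neg]) hrep'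
    rw [abs_neg] at this
    rwa [norm_sub_rev] at this
  · -- m = -1 : t - s = w + 2π
    have hrep' : t - s = w + 2 * π := by push_cast at hrep_ts; linarith
    exact keyB_lemma α ε z X b MX MX' L hα0 hα1 hε0 hXsupp hMX hMX0 hMX'0 hXlip hL0 hbL
      t s w ht hs hw hrep'

lemma sup_pointwise (hα0 : 0 < α) (hε0 : 0 < ε)
    (hXsupp : ∀ x : ℝ, 1 ≤ |x| → X x = 0)
    (hMX : ∀ t, |X t| ≤ MX) (hMX0 : 0 ≤ MX)
    (hL0 : 0 ≤ L)
    (hbL : ∀ u v : ℝ, dper u z ≤ ε → dper v z ≤ ε →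
      ‖b u - b v‖ ≤ L * dper u v ^ α)
    (x : ℝ) :
    ‖bze X b z ε x‖ ≤ ε ^ α * MX * L := by
  rw [bze_eq X b z ε hXsupp x]
  set t := red (x - z)
  have hdu : dper (z + rtr ε t) z ≤ ε :=
    le_trans (le_trans (dper_le_abs _ _) (le_of_eq (by ring_nf))) (rtr_abs_le ε hε0.le t)
  have hdz : dper z z ≤ ε := le_trans (dper_le_abs z z) (by simp [hε0.le])
  have hA2 : ‖b (z + rtr ε t) - b z‖ ≤ L * ε ^ α := by
    refine le_trans (hbL _ _ hdu hdz) ?_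
    gcongr
    exact dper_nonneg _ _
  calc ‖fzd X b z ε t‖ = |X t| * ‖b (z + rtr ε t) - b z‖ := by
        unfold fzd; rw [norm_mul, Complex.norm_real, Real.norm_eq_abs]
    _ ≤ MX * (L * ε ^ α) :=
        mul_le_mul (hMX t) hA2 (norm_nonneg _) hMX0
    _ = ε ^ α * MX * L := by ring

end Key

/-- Estimates for the localized coefficient `b_{z,ε}`: its sup-norm and periodic Hölder
seminorm are controlled by the local Hölder seminorm `[b]_{α,z,ε}`. -/
theorem localized_coefficient_bounds
    (α ε z : ℝ) (hα : α ∈ Set.Ioo (0 : ℝ) 1) (hε : ε ∈ Set.Ioo (0 : ℝ) (1 / 2))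
    (X : ℝ → ℝ) (hX : ContDiff ℝ 1 X) (hXsupp : ∀ x : ℝ, 1 ≤ |x| → X x = 0)
    (b : ℝ → ℂ) (hb : Per b) (hbfin : BddAbove (perHolderSet α b)) :
    BddAbove (perHolderSet α (bze X b z ε)) ∧
    (⨆ x : ℝ, ‖bze X b z ε x‖) ≤
        ε ^ α * (⨆ x : ℝ, |X x|) * locSemi α b z ε ∧
    perSemi α (bze X b z ε) ≤
        ((⨆ x : ℝ, |X x|) + ε ^ α * π ^ (1 - α) * (⨆ x : ℝ, |deriv X x|)) * locSemi α b z ε ∧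
    (⨆ x : ℝ, ‖bze X b z ε x‖) + perSemi α (bze X b z ε) ≤
        ((1 + ε ^ α) * (⨆ x : ℝ, |X x|) + ε ^ α * π ^ (1 - α) * (⨆ x : ℝ, |deriv X x|)) *
          locSemi α b z ε := by
  obtain ⟨hα0, hα1⟩ := hα
  obtain ⟨hε0, hε12⟩ := hε
  have hπ3 := pi_gt_three
  -- facts about X
  have hXc : Continuous X := hX.continuous
  have hXcs : HasCompactSupport X := by
    refine HasCompactSupport.intro' (K := Set.Icc (-1 : ℝ) 1) isCompact_Icc isClosed_Icc
      (fun x hx => hXsupp x ?_)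
    simp only [Set.mem_Icc, not_and_or, not_le] at hx
    rcases hx with h | h
    · rw [le_abs]; right; linarith
    · rw [le_abs]; left; linarith
  have hbddX : BddAbove (Set.range fun x : ℝ => |X x|) :=
    hXc.abs.bddAbove_range_of_hasCompactSupport hXcs.abs
  have hXle : ∀ t, |X t| ≤ ⨆ x : ℝ, |X x| := fun t => le_ciSup hbddX t
  have hMX0 : 0 ≤ ⨆ x : ℝ, |X x| := le_trans (abs_nonneg (X 0)) (hXle 0)
  have hX'c : Continuous (deriv X) := hX.continuous_deriv le_rfl
  have hX'cs : HasCompactSupport (deriv X) := hXcs.deriv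
  have hbddX' : BddAbove (Set.range fun x : ℝ => |deriv X x|) :=
    hX'c.abs.bddAbove_range_of_hasCompactSupport hX'cs.abs
  have hX'le : ∀ t, |deriv X t| ≤ ⨆ x : ℝ, |deriv X x| := fun t => le_ciSup hbddX' t
  have hMX'0 : 0 ≤ ⨆ x : ℝ, |deriv X x| := le_trans (abs_nonneg _) (hX'le 0)
  have hXlip : ∀ t s : ℝ, |X t - X s| ≤ (⨆ x : ℝ, |deriv X x|) * |t - s| := by
    intro t s
    have h := Convex.norm_image_sub_le_of_norm_deriv_le
      (f := X) (s := (Set.univ : Set ℝ))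
      (fun u _ => (hX.differentiable one_ne_zero).differentiableAt)
      (fun u _ => by simpa [Real.norm_eq_abs] using hX'le u)
      convex_univ (Set.mem_univ s) (Set.mem_univ t)
    simpa [Real.norm_eq_abs] using h
  -- facts about locSemi
  have hbdd_loc : BddAbove {r | ∃ x y : ℝ, dper x z ≤ ε ∧ dper y z ≤ ε ∧ 0 < dper x y ∧
      r = ‖b x - b y‖ / dper x y ^ α} := by
    refine hbfin.mono ?_
    rintro r ⟨x, y, _, _, h3, h4⟩
    exact ⟨x, y, h3, h4⟩
  have hL0 : 0 ≤ locSemi α b z ε := by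
    have hd1 : dper (z + ε / 2) z = |ε / 2| := by
      refine dper_eq_of_rep _ _ (ε / 2) 0 (by push_cast; ring) ?_
      rw [abs_of_pos (by linarith)]; linarith
    have hd1' : dper (z + ε / 2) z = ε / 2 := by rw [hd1, abs_of_pos (by linarith)]
    have hmem : ‖b (z + ε / 2) - b z‖ / dper (z + ε / 2) z ^ α ∈
        {r | ∃ x y : ℝ, dper x z ≤ ε ∧ dper y z ≤ ε ∧ 0 < dper x y ∧
          r = ‖b x - b y‖ / dper x y ^ α} := by
      refine ⟨z + ε / 2, z, by rw [hd1']; linarith, ?_, ?_, rfl⟩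
      · exact le_trans (dper_le_abs z z) (by simp; linarith)
      · rw [hd1']; linarith
    have hnn : 0 ≤ ‖b (z + ε / 2) - b z‖ / dper (z + ε / 2) z ^ α :=
      div_nonneg (norm_nonneg _) (rpow_nonneg (dper_nonneg _ _) _)
    exact le_trans hnn (le_csSup hbdd_loc hmem)
  have hbL := loc_bound α ε z hα0 b hb hbdd_loc
  -- main bounds
  set MX := ⨆ x : ℝ, |X x| with hMXdef
  set MX' := ⨆ x : ℝ, |deriv X x| with hMX'def
  set L := locSemi α b z ε with hLdef
  have hmain := main_lemma α ε z X b MX MX' L hα0 hα1 hε0 hXsupp hXle hMX0 hMX'0 hXlip hL0 hbL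
  have hsup := sup_pointwise α ε z X b MX L hα0 hε0 hXsupp hXle hMX0 hL0 hbL
  have hperset : ∀ r ∈ perHolderSet α (bze X b z ε),
      r ≤ (MX + ε ^ α * π ^ (1 - α) * MX') * L := by
    rintro r ⟨x, y, hd, rfl⟩
    rw [div_le_iff₀ (rpow_pos_of_pos hd α)]
    exact hmain x y
  have hCL0 : 0 ≤ (MX + ε ^ α * π ^ (1 - α) * MX') * L := by
    have : (0:ℝ) ≤ MX + ε ^ α * π ^ (1 - α) * MX' := by positivity
    exact mul_nonneg this hL0
  have h1 : BddAbove (perHolderSet α (bze X b z ε)) :=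
    ⟨(MX + ε ^ α * π ^ (1 - α) * MX') * L, fun r hr => hperset r hr⟩
  have h2 : (⨆ x : ℝ, ‖bze X b z ε x‖) ≤ ε ^ α * MX * L :=
    ciSup_le fun x => hsup x
  have h3 : perSemi α (bze X b z ε) ≤ (MX + ε ^ α * π ^ (1 - α) * MX') * L :=
    Real.sSup_le hperset hCL0
  refine ⟨h1, h2, h3, ?_⟩
  have heq : ((1 + ε ^ α) * MX + ε ^ α * π ^ (1 - α) * MX') * L =
      ε ^ α * MX * L + (MX + ε ^ α * π ^ (1 - α) * MX') * L := by ring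
  linarith
end
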